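/- Let A be a finite set of real numbers with |A| ≥ 2 and D = A - A. Then |D·D + D·D| ≫ |D|·|A|, i.e., there is an absolute constant c > 0 with |D·D + D·D| ≥ c·|D|·|A|. -/

import Mathlib

open scoped Pointwise

open Finset
open scoped Pointwise
noncomputable section
open scoped Classical

namespace UngarAux

variable {α : Type*} [Fintype α]

/-- rank of `p` in the order given by `ρ i`. -/
def rank (ρ : ℕ → α → ℝ) (i : ℕ) (p : α) : ℕ :=
  (Finset.univ.filter (fun q => ρ i q < ρ i p)).card

theorem rank_lt_rank {ρ : ℕ → α → ℝ} {i : ℕ}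
    {p q : α} (h : ρ i p < ρ i q) : rank ρ i p < rank ρ i q := by
  apply Finset.card_lt_card
  rw [Finset.ssubset_iff_of_subset]
  · exact ⟨p, by simp [h], by simp⟩
  · intro x hx
    simp only [mem_filter, mem_univ, true_and] at *
    exact lt_trans hx h

theorem rank_lt_iff {ρ : ℕ → α → ℝ} {i : ℕ} (hinj : Function.Injective (ρ i))
    (p q : α) : rank ρ i p < rank ρ i q ↔ ρ i p < ρ i q := by
  constructor
  · intro h
    rcases lt_trichotomy (ρ i p) (ρ i q) with h1 | h1 | h1
    · exact h1
    · rw [hinj h1] at h; omega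
    · exact absurd (rank_lt_rank h1) (by omega)
  · exact rank_lt_rank

theorem rank_inj {ρ : ℕ → α → ℝ} {i : ℕ} (hinj : Function.Injective (ρ i)) :
    Function.Injective (rank ρ i) := by
  intro p q h
  by_contra hne
  rcases lt_trichotomy (ρ i p) (ρ i q) with h1 | h1 | h1
  · exact absurd (rank_lt_rank h1) (by omega)
  · exact hne (hinj h1)
  · exact absurd (rank_lt_rank h1) (by omega)

theorem rank_lt_card {ρ : ℕ → α → ℝ} {i : ℕ} (p : α) :
    rank ρ i p < Fintype.card α := by
  have : (Finset.univ.filter (fun q => ρ i q < ρ i p)) ⊂ Finset.univ := by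
    rw [Finset.ssubset_univ_iff]
    intro h
    have hmem : p ∈ Finset.univ.filter (fun q => ρ i q < ρ i p) := by
      rw [h]; exact mem_univ p
    simp at hmem
  simpa [rank, Finset.card_univ] using Finset.card_lt_card this

theorem image_rank {ρ : ℕ → α → ℝ} {i : ℕ} (hinj : Function.Injective (ρ i)) :
    Finset.univ.image (rank ρ i) = Finset.range (Fintype.card α) := by
  apply Finset.eq_of_subset_of_card_le
  · intro j hj
    simp only [Finset.mem_image] at hj
    obtain ⟨p, _, rfl⟩ := hj
    simpa using rank_lt_card p
  · rw [Finset.card_range, Finset.card_image_of_injective _ (rank_inj hinj), Finset.card_univ]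

theorem rank_surj {ρ : ℕ → α → ℝ} {i : ℕ} (hinj : Function.Injective (ρ i))
    {j : ℕ} (hj : j < Fintype.card α) : ∃ p, rank ρ i p = j := by
  have : j ∈ Finset.univ.image (rank ρ i) := by
    rw [image_rank hinj]; simpa using hj
  simpa using this

theorem card_rank_lt {ρ : ℕ → α → ℝ} {i : ℕ} (hinj : Function.Injective (ρ i))
    {m : ℕ} (hm : m ≤ Fintype.card α) :
    (Finset.univ.filter fun p => rank ρ i p < m).card = m := by
  have himg : Finset.image (rank ρ i) (Finset.univ.filter fun p => rank ρ i p < m)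
      = Finset.range m := by
    apply Finset.Subset.antisymm
    · intro j hj
      simp only [Finset.mem_image, Finset.mem_filter] at hj
      obtain ⟨p, ⟨_, hp⟩, rfl⟩ := hj
      simpa using hp
    · intro j hj
      simp only [Finset.mem_range] at hj
      obtain ⟨p, rfl⟩ := rank_surj hinj (lt_of_lt_of_le hj hm)
      simp only [Finset.mem_image, Finset.mem_filter]
      exact ⟨p, ⟨mem_univ p, hj⟩, rfl⟩
  have := Finset.card_image_of_injective
    (Finset.univ.filter fun p => rank ρ i p < m) (rank_inj hinj)
  rw [himg, Finset.card_range] at this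
  omega



theorem evol {r : ℕ} {ρ g : ℕ → α → ℝ}
    (H1 : ∀ i, 1 ≤ i → i ≤ r → ∀ p q : α, p ≠ q →
      ((ρ (i-1) p < ρ (i-1) q ↔ ρ i p < ρ i q) ↔ g i p ≠ g i q))
    {p q : α} (hpq : p ≠ q) {i₀ : ℕ}
    (hi₀ : (1 ≤ i₀ ∧ i₀ ≤ r) ∧ g i₀ p = g i₀ q)
    (huniq : ∀ i, ((1 ≤ i ∧ i ≤ r) ∧ g i p = g i q) → i = i₀)
    {j : ℕ} (hj : j ≤ r) :
    (ρ j p < ρ j q ↔ (if i₀ ≤ j then ¬(ρ 0 p < ρ 0 q) else (ρ 0 p < ρ 0 q))) := by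
  induction j with
  | zero =>
    have : ¬ (i₀ ≤ 0) := by omega
    simp [this]
  | succ n ih =>
    have hn : n ≤ r := by omega
    have ihn := ih hn
    by_cases hg : g (n+1) p = g (n+1) q
    · have hio : n + 1 = i₀ := huniq (n+1) ⟨⟨by omega, hj⟩, hg⟩
      have h1 := H1 (n+1) (by omega) hj p q hpq
      simp only [Nat.add_sub_cancel] at h1
      have hflip : ¬ (ρ n p < ρ n q ↔ ρ (n+1) p < ρ (n+1) q) := by
        rw [h1]; simp [hg]
      have hcond : ¬ (i₀ ≤ n) := by omega
      have hcond2 : i₀ ≤ n + 1 := by omega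
      simp only [hcond, if_neg, if_false] at ihn
      simp only [hcond2, if_pos, if_true]
      tauto
    · have hio : n + 1 ≠ i₀ := by
        intro h
        exact hg (h ▸ hi₀.2)
      have h1 := H1 (n+1) (by omega) hj p q hpq
      simp only [Nat.add_sub_cancel] at h1
      have hsame : (ρ n p < ρ n q ↔ ρ (n+1) p < ρ (n+1) q) := by
        rw [h1]; simpa using hg
      have hcond : (i₀ ≤ n + 1) ↔ (i₀ ≤ n) := by omega
      rw [← hsame]
      by_cases hle : i₀ ≤ n + 1
      · rw [if_pos hle]
        rw [if_pos (hcond.mp hle)] at ihn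
        exact ihn
      · rw [if_neg hle]
        rw [if_neg (fun h => hle (hcond.mpr h))] at ihn
        exact ihn

theorem flip_between {r : ℕ} {ρ g : ℕ → α → ℝ}
    (H1 : ∀ i, 1 ≤ i → i ≤ r → ∀ p q : α, p ≠ q →
      ((ρ (i-1) p < ρ (i-1) q ↔ ρ i p < ρ i q) ↔ g i p ≠ g i q))
    (H2 : ∀ p q : α, p ≠ q → ∃! i, (1 ≤ i ∧ i ≤ r) ∧ g i p = g i q)
    {p q : α} (hpq : p ≠ q) {j₁ j₂ : ℕ} (h12 : j₁ ≤ j₂) (hj₂ : j₂ ≤ r)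
    (ha : ρ j₁ p < ρ j₁ q) (hb : ¬ (ρ j₂ p < ρ j₂ q)) :
    ∃ l, j₁ < l ∧ l ≤ j₂ ∧ g l p = g l q := by
  obtain ⟨i₀, hi₀, huniq⟩ := H2 p q hpq
  have e1 := evol H1 hpq hi₀ huniq (le_trans h12 hj₂)
  have e2 := evol H1 hpq hi₀ huniq hj₂
  by_cases hc1 : i₀ ≤ j₁
  · have hc2 : i₀ ≤ j₂ := le_trans hc1 h12
    rw [if_pos hc1] at e1
    rw [if_pos hc2] at e2
    tauto
  · by_cases hc2 : i₀ ≤ j₂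
    · exact ⟨i₀, by omega, hc2, hi₀.2⟩
    · rw [if_neg hc1] at e1
      rw [if_neg hc2] at e2
      tauto

omit [Fintype α] in
theorem ord_total {ρ : ℕ → α → ℝ} {i : ℕ} (hinj : Function.Injective (ρ i))
    {p q : α} (hpq : p ≠ q) (h : ¬ (ρ i p < ρ i q)) : ρ i q < ρ i p := by
  rcases lt_trichotomy (ρ i p) (ρ i q) with h1 | h1 | h1
  · exact absurd h1 h
  · exact absurd (hinj h1) hpq
  · exact h1

theorem rank_rev {r : ℕ} {ρ g : ℕ → α → ℝ}
    (hinj : ∀ i, i ≤ r → Function.Injective (ρ i))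
    (H1 : ∀ i, 1 ≤ i → i ≤ r → ∀ p q : α, p ≠ q →
      ((ρ (i-1) p < ρ (i-1) q ↔ ρ i p < ρ i q) ↔ g i p ≠ g i q))
    (H2 : ∀ p q : α, p ≠ q → ∃! i, (1 ≤ i ∧ i ≤ r) ∧ g i p = g i q)
    (p : α) :
    rank ρ r p = Fintype.card α - 1 - rank ρ 0 p := by
  have hset : Finset.univ.filter (fun q => ρ r q < ρ r p)
      = Finset.univ.filter (fun q => ρ 0 p < ρ 0 q) := by
    ext q
    simp only [mem_filter, mem_univ, true_and]
    by_cases hqp : q = p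
    · subst hqp; simp
    · obtain ⟨i₀, hi₀, huniq⟩ := H2 q p hqp
      have e := evol H1 hqp hi₀ huniq (le_refl r)
      rw [if_pos hi₀.1.2] at e
      rw [e]
      constructor
      · intro h
        exact ord_total (hinj 0 (Nat.zero_le r)) hqp h
      · intro h hlt
        exact absurd h (not_lt.mpr (le_of_lt hlt))
  have hcard : (Finset.univ.filter (fun q => ρ 0 p < ρ 0 q)).card
      = Fintype.card α - 1 - rank ρ 0 p := by
    have hdisj : Disjoint (Finset.univ.filter (fun q => ρ 0 q < ρ 0 p))
        (Finset.univ.filter (fun q => ρ 0 p < ρ 0 q)) := by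
      rw [Finset.disjoint_filter]
      intro x _ h1 h2
      exact absurd (lt_trans h1 h2) (lt_irrefl _)
    have hdisj2 : Disjoint {p} ((Finset.univ.filter (fun q => ρ 0 q < ρ 0 p))
        ∪ (Finset.univ.filter (fun q => ρ 0 p < ρ 0 q))) := by
      simp only [Finset.disjoint_singleton_left, Finset.mem_union, mem_filter]
      rintro (⟨_, h⟩ | ⟨_, h⟩) <;> exact absurd h (lt_irrefl _)
    have huniv : Finset.univ = {p} ∪ ((Finset.univ.filter (fun q => ρ 0 q < ρ 0 p))
        ∪ (Finset.univ.filter (fun q => ρ 0 p < ρ 0 q))) := by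
      apply Finset.Subset.antisymm
      · intro x _
        simp only [Finset.mem_union, Finset.mem_singleton, mem_filter, mem_univ, true_and]
        by_cases hxp : x = p
        · exact Or.inl hxp
        · rcases lt_trichotomy (ρ 0 x) (ρ 0 p) with h1 | h1 | h1
          · exact Or.inr (Or.inl h1)
          · exact absurd (hinj 0 (Nat.zero_le r) h1) hxp
          · exact Or.inr (Or.inr h1)
      · exact Finset.subset_univ _
    have := congrArg Finset.card huniv
    rw [Finset.card_union_of_disjoint hdisj2, Finset.card_union_of_disjoint hdisj,
      Finset.card_singleton, Finset.card_univ] at this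
    have hrk : (Finset.univ.filter (fun q => ρ 0 q < ρ 0 p)).card = rank ρ 0 p := rfl
    omega
  rw [rank, hset, hcard]



def toLeft (ρ : ℕ → α → ℝ) (m i : ℕ) : Finset α :=
  Finset.univ.filter fun p => m ≤ rank ρ (i-1) p ∧ rank ρ i p < m

def toRight (ρ : ℕ → α → ℝ) (m i : ℕ) : Finset α :=
  Finset.univ.filter fun p => rank ρ (i-1) p < m ∧ m ≤ rank ρ i p

theorem card_toLeft_eq_toRight {ρ : ℕ → α → ℝ} {r m i : ℕ}
    (hinj : ∀ i, i ≤ r → Function.Injective (ρ i)) (hir : i ≤ r)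
    (hm : m ≤ Fintype.card α) :
    (toLeft ρ m i).card = (toRight ρ m i).card := by
  have h1 : toLeft ρ m i
      = (Finset.univ.filter fun p => rank ρ i p < m) \
        (Finset.univ.filter fun p => rank ρ (i-1) p < m) := by
    ext p
    simp only [toLeft, mem_filter, mem_sdiff, mem_univ, true_and, not_lt]
    tauto
  have h2 : toRight ρ m i
      = (Finset.univ.filter fun p => rank ρ (i-1) p < m) \
        (Finset.univ.filter fun p => rank ρ i p < m) := by
    ext p
    simp only [toRight, mem_filter, mem_sdiff, mem_univ, true_and, not_lt]
  rw [h1, h2]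
  apply Finset.card_sdiff_comm
  rw [card_rank_lt (hinj i hir) hm, card_rank_lt (hinj (i-1) (by omega)) hm]

theorem changers_cofiber {ρ g : ℕ → α → ℝ} {r m i : ℕ}
    (hinj : ∀ i, i ≤ r → Function.Injective (ρ i))
    (H1 : ∀ i, 1 ≤ i → i ≤ r → ∀ p q : α, p ≠ q →
      ((ρ (i-1) p < ρ (i-1) q ↔ ρ i p < ρ i q) ↔ g i p ≠ g i q))
    (hi : 1 ≤ i) (hir : i ≤ r)
    {p q : α} (hp : p ∈ toRight ρ m i) (hq : q ∈ toLeft ρ m i) :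
    g i p = g i q := by
  simp only [toRight, mem_filter, mem_univ, true_and] at hp
  simp only [toLeft, mem_filter, mem_univ, true_and] at hq
  have hpq : p ≠ q := by
    intro h; subst h; omega
  have hord1 : ρ (i-1) p < ρ (i-1) q := by
    rw [← rank_lt_iff (hinj (i-1) (by omega))]; omega
  have hord2 : ¬ (ρ i p < ρ i q) := by
    rw [← rank_lt_iff (hinj i hir)]; omega
  have h1 := H1 i hi hir p q hpq
  by_contra hne
  exact hord2 ((h1.mpr hne).mp hord1)

theorem top_lemma {ρ g : ℕ → α → ℝ} {r m i : ℕ}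
    (hinj : ∀ i, i ≤ r → Function.Injective (ρ i))
    (H3 : ∀ i, 1 ≤ i → i ≤ r → ∀ s, (s = i - 1 ∨ s = i) → ∀ p p' q : α,
      g i p = g i p' → g i q ≠ g i p → ¬(ρ s p < ρ s q ∧ ρ s q < ρ s p'))
    (hi : 1 ≤ i) (hir : i ≤ r) {t : ℕ} (ht : t = i - 1 ∨ t = i)
    {x y f : α} (hgxy : g i x = g i y) (hgf : g i f ≠ g i x)
    (hx : rank ρ t x < m) (hy : m ≤ rank ρ t y) (hf : rank ρ t f < m) :
    ρ t f < ρ t x := by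
  have htr : t ≤ r := by omega
  have hfy : ρ t f < ρ t y := by
    rw [← rank_lt_iff (hinj t htr)]; omega
  have hfx : f ≠ x := fun h => hgf (h ▸ rfl)
  rcases lt_trichotomy (ρ t f) (ρ t x) with h | h | h
  · exact h
  · exact absurd (hinj t htr h) hfx
  · exact absurd ⟨h, hfy⟩ (H3 i hi hir t ht x y f hgxy hgf)

theorem bot_lemma {ρ g : ℕ → α → ℝ} {r m i : ℕ}
    (hinj : ∀ i, i ≤ r → Function.Injective (ρ i))
    (H3 : ∀ i, 1 ≤ i → i ≤ r → ∀ s, (s = i - 1 ∨ s = i) → ∀ p p' q : α,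
      g i p = g i p' → g i q ≠ g i p → ¬(ρ s p < ρ s q ∧ ρ s q < ρ s p'))
    (hi : 1 ≤ i) (hir : i ≤ r) {t : ℕ} (ht : t = i - 1 ∨ t = i)
    {x y h : α} (hgxy : g i x = g i y) (hgh : g i h ≠ g i x)
    (hx : rank ρ t x < m) (hy : m ≤ rank ρ t y) (hh : m ≤ rank ρ t h) :
    ρ t y < ρ t h := by
  have htr : t ≤ r := by omega
  have hxh : ρ t x < ρ t h := by
    rw [← rank_lt_iff (hinj t htr)]; omega
  have hhy : h ≠ y := by
    intro he
    exact hgh (he ▸ hgxy.symm)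
  rcases lt_trichotomy (ρ t y) (ρ t h) with h1 | h1 | h1
  · exact h1
  · exact absurd (hinj t htr h1.symm) hhy
  · exact absurd ⟨hxh, h1⟩ (H3 i hi hir t ht x y h hgxy hgh)

theorem side_const {ρ : ℕ → α → ℝ} {r m : ℕ} {i j : ℕ} (hij : i ≤ j) (hjr : j ≤ r)
    (hnc : ∀ l, i < l → l ≤ j → (toLeft ρ m l) = ∅ ∧ (toRight ρ m l) = ∅)
    (p : α) : (rank ρ j p < m ↔ rank ρ i p < m) := by
  induction j with
  | zero =>
    have : i = 0 := by omega
    rw [this]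
  | succ n ih =>
    by_cases hin : i = n + 1
    · rw [hin]
    · have hi_n : i ≤ n := by omega
      have ihh := ih hi_n (by omega) (fun l hl1 hl2 => hnc l hl1 (by omega))
      rw [← ihh]
      have hemp := hnc (n+1) (by omega) (le_refl _)
      constructor
      · intro h1
        by_contra h2
        have : p ∈ toLeft ρ m (n+1) := by
          simp only [toLeft, mem_filter, mem_univ, true_and, Nat.add_sub_cancel]
          omega
        rw [hemp.1] at this
        exact absurd this (Finset.notMem_empty p)
      · intro h1
        by_contra h2
        have : p ∈ toRight ρ m (n+1) := by
          simp only [toRight, mem_filter, mem_univ, true_and, Nat.add_sub_cancel]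
          omega
        rw [hemp.2] at this
        exact absurd this (Finset.notMem_empty p)

theorem filtering {ρ g : ℕ → α → ℝ} {r m : ℕ}
    (hinj : ∀ i, i ≤ r → Function.Injective (ρ i))
    (H1 : ∀ i, 1 ≤ i → i ≤ r → ∀ p q : α, p ≠ q →
      ((ρ (i-1) p < ρ (i-1) q ↔ ρ i p < ρ i q) ↔ g i p ≠ g i q))
    (H2 : ∀ p q : α, p ≠ q → ∃! i, (1 ≤ i ∧ i ≤ r) ∧ g i p = g i q)
    (H3 : ∀ i, 1 ≤ i → i ≤ r → ∀ s, (s = i - 1 ∨ s = i) → ∀ p p' q : α,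
      g i p = g i p' → g i q ≠ g i p → ¬(ρ s p < ρ s q ∧ ρ s q < ρ s p'))
    (hm1 : 1 ≤ m) (hmN : m + 1 ≤ Fintype.card α)
    {i i' : ℕ} (hi : 1 ≤ i) (hii' : i < i') (hi'r : i' ≤ r)
    (hci : (toLeft ρ m i).Nonempty) (hci' : (toLeft ρ m i').Nonempty)
    (hnc : ∀ l, i < l → l < i' → ¬ (toLeft ρ m l).Nonempty) :
    (toLeft ρ m i).card ≤ (Finset.Ioo i i').card := by
  have hmN' : m ≤ Fintype.card α := by omega
  have hir : i ≤ r := by omega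
  have hcRi : (toRight ρ m i).Nonempty := by
    rw [← Finset.card_pos, ← card_toLeft_eq_toRight hinj hir hmN']
    exact Finset.card_pos.mpr hci
  have hcRi' : (toRight ρ m i').Nonempty := by
    rw [← Finset.card_pos, ← card_toLeft_eq_toRight hinj hi'r hmN']
    exact Finset.card_pos.mpr hci'
  obtain ⟨pL, hpL⟩ := hci
  obtain ⟨pR, hpR⟩ := hcRi
  obtain ⟨pL', hpL'⟩ := hci'
  obtain ⟨pR', hpR'⟩ := hcRi'
  have hwin : ∀ l, i < l → l ≤ i' - 1 → (toLeft ρ m l) = ∅ ∧ (toRight ρ m l) = ∅ := by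
    intro l hl1 hl2
    have h1 : toLeft ρ m l = ∅ :=
      Finset.not_nonempty_iff_eq_empty.mp (hnc l hl1 (by omega))
    have h2 : (toRight ρ m l).card = 0 := by
      rw [← card_toLeft_eq_toRight hinj (by omega) hmN', h1]
      simp
    exact ⟨h1, Finset.card_eq_zero.mp h2⟩
  have hside : ∀ p, rank ρ (i'-1) p < m ↔ rank ρ i p < m := fun p =>
    side_const (r := r) (m := m) (i := i) (j := i'-1) (by omega) (by omega) hwin p
  obtain ⟨o₁, ho₁⟩ := rank_surj (hinj (i'-1) (by omega)) (j := m-1) (by omega)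
  obtain ⟨o₂, ho₂⟩ := rank_surj (hinj (i'-1) (by omega)) (j := m) (by omega)
  have hpL'm := hpL'
  simp only [toLeft, mem_filter, mem_univ, true_and] at hpL'm
  have hpR'm := hpR'
  simp only [toRight, mem_filter, mem_univ, true_and] at hpR'm
  have hpLm := hpL
  simp only [toLeft, mem_filter, mem_univ, true_and] at hpLm
  have hpRm := hpR
  simp only [toRight, mem_filter, mem_univ, true_and] at hpRm
  have hgR'L' : g i' pR' = g i' pL' := changers_cofiber hinj H1 (by omega) hi'r hpR' hpL'
  have hgRL : g i pR = g i pL := changers_cofiber hinj H1 hi hir hpR hpL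
  -- o₁ is in the crossing fiber of move i'
  have ho₁F : g i' o₁ = g i' pL' := by
    by_contra hne
    have hne' : g i' o₁ ≠ g i' pR' := by rw [hgR'L']; exact hne
    by_cases heq : o₁ = pR'
    · exact hne' (by rw [heq])
    · have htop := top_lemma hinj H3 (by omega) hi'r (Or.inl rfl)
        (x := pR') (y := pL') (f := o₁) hgR'L' hne'
        hpR'm.1 hpL'm.1 (by omega)
      have hrk : rank ρ (i'-1) pR' < rank ρ (i'-1) o₁ := by
        have hne2 : rank ρ (i'-1) pR' ≠ rank ρ (i'-1) o₁ :=
          fun h => heq (rank_inj (hinj (i'-1) (by omega)) h).symm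
        omega
      have := (rank_lt_iff (hinj (i'-1) (by omega)) pR' o₁).mp hrk
      exact absurd htop (not_lt.mpr (le_of_lt this))
  have ho₂F : g i' o₂ = g i' pL' := by
    by_contra hne
    by_cases heq : o₂ = pL'
    · exact hne (by rw [heq])
    · have hne' : g i' o₂ ≠ g i' pR' := by rw [hgR'L']; exact hne
      have hbot := bot_lemma hinj H3 (by omega) hi'r (Or.inl rfl)
        (x := pR') (y := pL') (h := o₂) hgR'L' hne'
        hpR'm.1 hpL'm.1 (by omega)
      have hrk : rank ρ (i'-1) o₂ < rank ρ (i'-1) pL' := by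
        have hne2 : rank ρ (i'-1) o₂ ≠ rank ρ (i'-1) pL' :=
          fun h => heq (rank_inj (hinj (i'-1) (by omega)) h)
        omega
      have := (rank_lt_iff (hinj (i'-1) (by omega)) o₂ pL').mp hrk
      exact absurd hbot (not_lt.mpr (le_of_lt this))
  have hkey : g i o₁ ≠ g i pL ∨ g i o₂ ≠ g i pL := by
    by_contra hb
    push_neg at hb
    obtain ⟨h1, h2⟩ := hb
    have h12 : o₁ ≠ o₂ := by
      intro h
      rw [h] at ho₁
      omega
    obtain ⟨i₀, _, huniq⟩ := H2 o₁ o₂ h12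
    have e1 : i = i₀ := huniq i ⟨⟨hi, hir⟩, by rw [h1, h2]⟩
    have e2 : i' = i₀ := huniq i' ⟨⟨by omega, hi'r⟩, by rw [ho₁F, ho₂F]⟩
    omega
  rcases hkey with hcase | hcase
  · -- inject toLeft i into the window, using f := o₁
    have hfrank : rank ρ (i'-1) o₁ < m := by omega
    have hfranki : rank ρ i o₁ < m := (hside o₁).mp hfrank
    have hstep : ∀ x ∈ toLeft ρ m i, ∃ l, i < l ∧ l ≤ i' - 1 ∧ g l o₁ = g l x := by
      intro x hx
      have hxm := hx
      simp only [toLeft, mem_filter, mem_univ, true_and] at hxm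
      have hgx : g i x = g i pL := by
        by_cases hxpL : x = pL
        · rw [hxpL]
        · have h1 := changers_cofiber hinj H1 hi hir hpR hx
          rw [← h1, hgRL]
      have hgfx : g i o₁ ≠ g i x := by rw [hgx]; exact hcase
      have hgxpR : g i x = g i pR := by rw [hgx, hgRL]
      have ha : ρ i o₁ < ρ i x :=
        top_lemma hinj H3 hi hir (Or.inr rfl) (x := x) (y := pR) (f := o₁)
          hgxpR hgfx hxm.2 hpRm.2 hfranki
      have hfx_ne : o₁ ≠ x := fun h => hgfx (h ▸ rfl)
      have hxside : rank ρ (i'-1) x < m := (hside x).mpr hxm.2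
      have hb : ¬ (ρ (i'-1) o₁ < ρ (i'-1) x) := by
        have hne : rank ρ (i'-1) x ≠ rank ρ (i'-1) o₁ :=
          fun h => hfx_ne (rank_inj (hinj (i'-1) (by omega)) h).symm
        have hrk : rank ρ (i'-1) x < rank ρ (i'-1) o₁ := by omega
        exact not_lt.mpr (le_of_lt ((rank_lt_iff (hinj (i'-1) (by omega)) x o₁).mp hrk))
      obtain ⟨l, hl1, hl2, hl3⟩ := flip_between H1 H2 hfx_ne
        (j₁ := i) (j₂ := i'-1) (by omega) (by omega) ha hb
      exact ⟨l, hl1, hl2, hl3⟩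
    choose lfun hl1 hl2 hl3 using hstep
    have hmap : ∀ x ∈ toLeft ρ m i,
        (if hx : x ∈ toLeft ρ m i then lfun x hx else 0) ∈ Finset.Ioo i i' := by
      intro x hx
      rw [dif_pos hx]
      simp only [Finset.mem_Ioo]
      exact ⟨hl1 x hx, by have := hl2 x hx; omega⟩
    apply Finset.card_le_card_of_injOn _ hmap
    intro a ha' b hb' hab
    simp only [Finset.mem_coe] at ha' hb'
    simp only [dif_pos ha', dif_pos hb'] at hab
    by_contra hne
    have hga : g i a = g i pL := by
      by_cases hxpL : a = pL
      · rw [hxpL]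
      · rw [← changers_cofiber hinj H1 hi hir hpR ha', hgRL]
    have hgb : g i b = g i pL := by
      by_cases hxpL : b = pL
      · rw [hxpL]
      · rw [← changers_cofiber hinj H1 hi hir hpR hb', hgRL]
    obtain ⟨i₀, _, huniq⟩ := H2 a b hne
    have e1 : i = i₀ := huniq i ⟨⟨hi, hir⟩, by rw [hga, hgb]⟩
    have e2 : lfun a ha' = i₀ := by
      apply huniq
      refine ⟨⟨by have := hl1 a ha'; omega, by have := hl2 a ha'; omega⟩, ?_⟩
      have h3a := hl3 a ha'
      have h3b := hl3 b hb'
      rw [← hab] at h3b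
      rw [← h3a, h3b]
    have := hl1 a ha'
    omega
  · -- inject toRight i into the window, using f := o₂
    rw [card_toLeft_eq_toRight hinj hir hmN']
    have hfrank : m ≤ rank ρ (i'-1) o₂ := by omega
    have hfranki : m ≤ rank ρ i o₂ := by
      by_contra hcon
      push_neg at hcon
      have := (hside o₂).mpr hcon
      omega
    have hstep : ∀ x ∈ toRight ρ m i, ∃ l, i < l ∧ l ≤ i' - 1 ∧ g l x = g l o₂ := by
      intro x hx
      have hxm := hx
      simp only [toRight, mem_filter, mem_univ, true_and] at hxm
      have hgx : g i x = g i pL := changers_cofiber hinj H1 hi hir hx hpL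
      have hgfx : g i o₂ ≠ g i x := by rw [hgx]; exact hcase
      have ha : ρ i x < ρ i o₂ :=
        bot_lemma hinj H3 hi hir (Or.inr rfl) (x := pL) (y := x) (h := o₂)
          (by rw [hgx]) (by rw [← hgx] at hcase; exact fun hh => hcase (by rw [hh, hgx]))
          hpLm.2 hxm.2 hfranki
      have hfx_ne : x ≠ o₂ := fun h => hgfx (by rw [h])
      have hxside : m ≤ rank ρ (i'-1) x := by
        by_contra hcon
        push_neg at hcon
        have := (hside x).mp hcon
        omega
      have hb : ¬ (ρ (i'-1) x < ρ (i'-1) o₂) := by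
        have hne : rank ρ (i'-1) o₂ ≠ rank ρ (i'-1) x :=
          fun h => hfx_ne (rank_inj (hinj (i'-1) (by omega)) h).symm
        have hrk : rank ρ (i'-1) o₂ < rank ρ (i'-1) x := by omega
        exact not_lt.mpr (le_of_lt ((rank_lt_iff (hinj (i'-1) (by omega)) o₂ x).mp hrk))
      obtain ⟨l, hl1, hl2, hl3⟩ := flip_between H1 H2 hfx_ne
        (j₁ := i) (j₂ := i'-1) (by omega) (by omega) ha hb
      exact ⟨l, hl1, hl2, hl3⟩
    choose lfun hl1 hl2 hl3 using hstep
    have hmap : ∀ x ∈ toRight ρ m i,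
        (if hx : x ∈ toRight ρ m i then lfun x hx else 0) ∈ Finset.Ioo i i' := by
      intro x hx
      rw [dif_pos hx]
      simp only [Finset.mem_Ioo]
      exact ⟨hl1 x hx, by have := hl2 x hx; omega⟩
    apply Finset.card_le_card_of_injOn _ hmap
    intro a ha' b hb' hab
    simp only [Finset.mem_coe] at ha' hb'
    simp only [dif_pos ha', dif_pos hb'] at hab
    by_contra hne
    have hga : g i a = g i pL := changers_cofiber hinj H1 hi hir ha' hpL
    have hgb : g i b = g i pL := changers_cofiber hinj H1 hi hir hb' hpL
    obtain ⟨i₀, _, huniq⟩ := H2 a b hne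
    have e1 : i = i₀ := huniq i ⟨⟨hi, hir⟩, by rw [hga, hgb]⟩
    have e2 : lfun a ha' = i₀ := by
      apply huniq
      refine ⟨⟨by have := hl1 a ha'; omega, by have := hl2 a ha'; omega⟩, ?_⟩
      have h3a := hl3 a ha'
      have h3b := hl3 b hb'
      rw [← hab] at h3b
      rw [h3a, ← h3b]
    have := hl1 a ha'
    omega

theorem exists_change {ρ : ℕ → α → ℝ} {r m : ℕ} {p : α}
    (h : ¬ (rank ρ 0 p < m ↔ rank ρ r p < m)) :
    ∃ i, 1 ≤ i ∧ i ≤ r ∧ (p ∈ toLeft ρ m i ∨ p ∈ toRight ρ m i) := by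
  by_contra hcon
  push_neg at hcon
  have hstep : ∀ j, j ≤ r → (rank ρ 0 p < m ↔ rank ρ j p < m) := by
    intro j
    induction j with
    | zero => intro _; exact Iff.rfl
    | succ n ih =>
      intro hj
      have hn := ih (by omega)
      have hnm := hcon (n+1) (by omega) (by omega)
      have h1 : p ∉ toLeft ρ m (n+1) := hnm.1
      have h2 : p ∉ toRight ρ m (n+1) := hnm.2
      simp only [toLeft, toRight, mem_filter, mem_univ, true_and, not_and, not_lt,
        Nat.add_sub_cancel] at h1 h2
      rw [hn]
      constructor
      · intro hlt
        by_contra hge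
        push_neg at hge
        exact absurd (h2 hlt) (by omega)
      · intro hlt
        by_contra hge
        push_neg at hge
        exact absurd (h1 hge) (by omega)
  exact h (hstep r (le_refl r))

theorem ungar_abstract {K r : ℕ} {ρ g : ℕ → α → ℝ}
    (hinj : ∀ i, i ≤ r → Function.Injective (ρ i))
    (H1 : ∀ i, 1 ≤ i → i ≤ r → ∀ p q : α, p ≠ q →
      ((ρ (i-1) p < ρ (i-1) q ↔ ρ i p < ρ i q) ↔ g i p ≠ g i q))
    (H2 : ∀ p q : α, p ≠ q → ∃! i, (1 ≤ i ∧ i ≤ r) ∧ g i p = g i q)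
    (H3 : ∀ i, 1 ≤ i → i ≤ r → ∀ s, (s = i - 1 ∨ s = i) → ∀ p p' q : α,
      g i p = g i p' → g i q ≠ g i p → ¬(ρ s p < ρ s q ∧ ρ s q < ρ s p'))
    (H4 : ∀ i, 1 ≤ i → i ≤ r → ∀ p : α,
      (Finset.univ.filter (fun q => g i q = g i p)).card ≤ K) :
    Fintype.card α ≤ 2*r + K + 1 := by
  by_cases hN2 : Fintype.card α < 2
  · omega
  push_neg at hN2
  set m := Fintype.card α / 2 with hm
  have hm1 : 1 ≤ m := by omega
  have hmN : m + 1 ≤ Fintype.card α := by omega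
  classical
  set CS := Finset.univ.filter
    (fun p : α => ¬ (rank ρ 0 p < m ↔ rank ρ r p < m)) with hCS
  have hCScard : Fintype.card α - 1 ≤ CS.card := by
    have hsub : Finset.univ \ CS ⊆ Finset.univ.filter (fun p => rank ρ 0 p = m) := by
      intro p hp
      rw [Finset.mem_sdiff] at hp
      have hnot := hp.2
      rw [hCS, Finset.mem_filter] at hnot
      push_neg at hnot
      have hiff : rank ρ 0 p < m ↔ rank ρ r p < m := hnot (Finset.mem_univ p)
      have hrev := rank_rev hinj H1 H2 p
      have h0 := rank_lt_card (ρ := ρ) (i := 0) p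
      rw [Finset.mem_filter]
      refine ⟨Finset.mem_univ p, ?_⟩
      by_cases hc : rank ρ 0 p < m
      · have := hiff.mp hc
        omega
      · have : ¬ (rank ρ r p < m) := fun hh => hc (hiff.mpr hh)
        omega
    have h1 : (Finset.univ.filter (fun p => rank ρ 0 p = m)).card ≤ 1 := by
      rw [Finset.card_le_one]
      intro a ha b hb
      simp only [mem_filter] at ha hb
      exact rank_inj (hinj 0 (by omega)) (ha.2.trans hb.2.symm)
    have h2 : (Finset.univ \ CS).card = Fintype.card α - CS.card := by
      rw [Finset.card_sdiff_of_subset (Finset.subset_univ CS), Finset.card_univ]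
    have h3 := Finset.card_le_card hsub
    omega
  set T := (Finset.Icc 1 r).filter (fun i => (toLeft ρ m i).Nonempty) with hT
  have hTmem : ∀ i ∈ T, 1 ≤ i ∧ i ≤ r ∧ (toLeft ρ m i).Nonempty := by
    intro i hi
    simp only [hT, mem_filter, Finset.mem_Icc] at hi
    exact ⟨hi.1.1, hi.1.2, hi.2⟩
  have hCSsub : CS ⊆ T.biUnion (fun i => toLeft ρ m i ∪ toRight ρ m i) := by
    intro p hp
    simp only [hCS, mem_filter, mem_univ, true_and] at hp
    obtain ⟨i, hi1, hi2, hmem⟩ := exists_change hp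
    have hiT : i ∈ T := by
      simp only [hT, mem_filter, Finset.mem_Icc]
      refine ⟨⟨hi1, hi2⟩, ?_⟩
      rcases hmem with h | h
      · exact ⟨p, h⟩
      · rw [← Finset.card_pos, card_toLeft_eq_toRight (m := m) hinj hi2 (by omega)]
        exact Finset.card_pos.mpr ⟨p, h⟩
    refine Finset.mem_biUnion.mpr ⟨i, hiT, ?_⟩
    rcases hmem with h | h
    · exact Finset.mem_union_left _ h
    · exact Finset.mem_union_right _ h
  have hsum1 : CS.card ≤ ∑ i ∈ T, 2 * (toLeft ρ m i).card := by
    calc CS.card ≤ (T.biUnion (fun i => toLeft ρ m i ∪ toRight ρ m i)).card :=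
          Finset.card_le_card hCSsub
      _ ≤ ∑ i ∈ T, (toLeft ρ m i ∪ toRight ρ m i).card := Finset.card_biUnion_le
      _ ≤ ∑ i ∈ T, 2 * (toLeft ρ m i).card := by
          apply Finset.sum_le_sum
          intro i hiT
          have hcu := Finset.card_union_le (toLeft ρ m i) (toRight ρ m i)
          have heq := card_toLeft_eq_toRight (i := i) (m := m) hinj (hTmem i hiT).2.1 (by omega)
          omega
  by_cases hTne : T.Nonempty
  swap
  · rw [Finset.not_nonempty_iff_eq_empty] at hTne
    rw [hTne, Finset.sum_empty] at hsum1
    omega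
  set iM := T.max' hTne with hiM
  have hiMT : iM ∈ T := T.max'_mem hTne
  obtain ⟨hiM1, hiMr, hiMne⟩ := hTmem iM hiMT
  have hKbound : 2 * (toLeft ρ m iM).card ≤ K := by
    obtain ⟨pl, hpl⟩ := hiMne
    have hRne : (toRight ρ m iM).Nonempty := by
      rw [← Finset.card_pos, ← card_toLeft_eq_toRight (m := m) hinj hiMr (by omega)]
      exact Finset.card_pos.mpr ⟨pl, hpl⟩
    obtain ⟨pr, hpr⟩ := hRne
    have hsubF : toLeft ρ m iM ∪ toRight ρ m iM
        ⊆ Finset.univ.filter (fun q => g iM q = g iM pl) := by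
      intro q hq
      simp only [mem_filter, mem_univ, true_and]
      rcases Finset.mem_union.mp hq with h | h
      · by_cases hq' : q = pl
        · rw [hq']
        · rw [← changers_cofiber hinj H1 hiM1 hiMr hpr h,
            changers_cofiber hinj H1 hiM1 hiMr hpr hpl]
      · exact changers_cofiber hinj H1 hiM1 hiMr h hpl
    have hdisjLR : Disjoint (toLeft ρ m iM) (toRight ρ m iM) := by
      rw [Finset.disjoint_left]
      intro q h1 h2
      simp only [toLeft, toRight, mem_filter, mem_univ, true_and] at h1 h2
      omega
    have := Finset.card_le_card hsubF
    rw [Finset.card_union_of_disjoint hdisjLR,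
      card_toLeft_eq_toRight (m := m) hinj hiMr (by omega)] at this
    have h4 := H4 iM hiM1 hiMr pl
    have heq := card_toLeft_eq_toRight (i := iM) (m := m) hinj hiMr (by omega)
    omega
  set T' := T.erase iM with hT'
  set nxt : ℕ → ℕ := fun i =>
    if h : (T.filter (fun j => i < j)).Nonempty then (T.filter (fun j => i < j)).min' h
    else 0 with hnxt
  have hnxtT' : ∀ i ∈ T', nxt i ∈ T ∧ i < nxt i ∧ ∀ l, i < l → l < nxt i → l ∉ T := by
    intro i hiT'
    have hne : (T.filter (fun j => i < j)).Nonempty := by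
      refine ⟨iM, ?_⟩
      simp only [mem_filter]
      exact ⟨hiMT, lt_of_le_of_ne (T.le_max' i (Finset.mem_of_mem_erase hiT'))
        (Finset.ne_of_mem_erase hiT')⟩
    have hmin := Finset.min'_mem _ hne
    simp only [mem_filter] at hmin
    refine ⟨by simp only [hnxt, dif_pos hne]; exact hmin.1,
      by simp only [hnxt, dif_pos hne]; exact hmin.2, ?_⟩
    intro l hl1 hl2 hlT
    simp only [hnxt, dif_pos hne] at hl2
    have : (T.filter (fun j => i < j)).min' hne ≤ l :=
      Finset.min'_le _ l (by simp only [mem_filter]; exact ⟨hlT, hl1⟩)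
    omega
  have hWbound : ∀ i ∈ T', (toLeft ρ m i).card ≤ (Finset.Ioo i (nxt i)).card := by
    intro i hiT'
    obtain ⟨hnT, hnlt, hngap⟩ := hnxtT' i hiT'
    obtain ⟨hi1, hir, hine⟩ := hTmem i (Finset.mem_of_mem_erase hiT')
    obtain ⟨hn1, hnr, hnne⟩ := hTmem (nxt i) hnT
    apply filtering hinj H1 H2 H3 hm1 hmN hi1 hnlt hnr hine hnne
    intro l hl1 hl2 hlne
    refine hngap l hl1 hl2 ?_
    simp only [hT, mem_filter, Finset.mem_Icc]
    exact ⟨⟨by omega, by omega⟩, hlne⟩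
  have hdisjW : ∀ i₁ ∈ T', ∀ i₂ ∈ T', i₁ ≠ i₂ →
      Disjoint (Finset.Ioo i₁ (nxt i₁)) (Finset.Ioo i₂ (nxt i₂)) := by
    intro i₁ h₁ i₂ h₂ hne
    rcases lt_or_gt_of_ne hne with hlt | hlt
    · have := (hnxtT' i₁ h₁).2.2
      rw [Finset.disjoint_left]
      intro a ha1 ha2
      simp only [Finset.mem_Ioo] at ha1 ha2
      -- i₂ ∈ T and i₁ < i₂, so nxt i₁ ≤ i₂
      by_cases hcc : nxt i₁ ≤ i₂
      · omega
      · push_neg at hcc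
        exact this i₂ hlt hcc (Finset.mem_of_mem_erase h₂)
    · have := (hnxtT' i₂ h₂).2.2
      rw [Finset.disjoint_left]
      intro a ha1 ha2
      simp only [Finset.mem_Ioo] at ha1 ha2
      by_cases hcc : nxt i₂ ≤ i₁
      · omega
      · push_neg at hcc
        exact this i₁ hlt hcc (Finset.mem_of_mem_erase h₁)
  have hWsub : ∀ i ∈ T', Finset.Ioo i (nxt i) ⊆ (Finset.Icc 1 r) \ T := by
    intro i hiT'
    obtain ⟨hnT, hnlt, hngap⟩ := hnxtT' i hiT'
    obtain ⟨hi1, hir, _⟩ := hTmem i (Finset.mem_of_mem_erase hiT')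
    obtain ⟨hn1, hnr, _⟩ := hTmem (nxt i) hnT
    intro l hl
    simp only [Finset.mem_Ioo] at hl
    simp only [Finset.mem_sdiff, Finset.mem_Icc]
    exact ⟨⟨by omega, by omega⟩, hngap l hl.1 hl.2⟩
  have hsum2 : ∑ i ∈ T', (toLeft ρ m i).card ≤ r - T.card := by
    calc ∑ i ∈ T', (toLeft ρ m i).card
        ≤ ∑ i ∈ T', (Finset.Ioo i (nxt i)).card := Finset.sum_le_sum hWbound
      _ = (T'.biUnion (fun i => Finset.Ioo i (nxt i))).card :=
          (Finset.card_biUnion hdisjW).symm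
      _ ≤ ((Finset.Icc 1 r) \ T).card := by
          apply Finset.card_le_card
          intro l hl
          obtain ⟨i, hi, hli⟩ := Finset.mem_biUnion.mp hl
          exact hWsub i hi hli
      _ ≤ r - T.card := by
          rw [Finset.card_sdiff_of_subset (by
            intro x hx
            obtain ⟨h1, h2, _⟩ := hTmem x hx
            simp only [Finset.mem_Icc]
            exact ⟨h1, h2⟩)]
          simp [Nat.card_Icc]
  have hsplit : ∑ i ∈ T, 2 * (toLeft ρ m i).card
      = 2 * (toLeft ρ m iM).card + ∑ i ∈ T', 2 * (toLeft ρ m i).card :=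
    (Finset.add_sum_erase T _ hiMT).symm
  have hTcard : T.card ≤ r := by
    have := Finset.card_le_card (s := T) (t := Finset.Icc 1 r) (by
      intro x hx
      obtain ⟨h1, h2, _⟩ := hTmem x hx
      simp only [Finset.mem_Icc]
      exact ⟨h1, h2⟩)
    simpa [Nat.card_Icc] using this
  have hfinal : ∑ i ∈ T', 2 * (toLeft ρ m i).card ≤ 2 * (r - T.card) := by
    rw [← Finset.mul_sum]
    omega
  omega

omit [Fintype α] in
theorem sign_transfer {a b c : ℝ} (ha : a < 0) (hb : b < 0) (h : a * c < 0) : b * c < 0 := by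
  rcases lt_trichotomy c 0 with h' | h' | h'
  · nlinarith
  · subst h'
    exact absurd h (by simp)
  · exact mul_neg_of_neg_of_pos hb h'

omit [Fintype α] in
theorem sign_transfer' {a b c : ℝ} (ha : 0 < a) (hb : 0 < b) (h : a * c < 0) : b * c < 0 := by
  rcases lt_trichotomy c 0 with h' | h' | h'
  · exact mul_neg_of_pos_of_neg hb h'
  · subst h'
    exact absurd h (by simp)
  · nlinarith

set_option maxHeartbeats 1000000 in
/-- The number of points is controlled by the number of slopes (Ungar-type bound). -/
theorem slopes_bound (K : ℕ) (pts : Finset (ℝ × ℝ))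
    (hx : ∀ p ∈ pts, ∀ q ∈ pts, p ≠ q → p.1 ≠ q.1)
    (hK : ∀ c d : ℝ, (pts.filter (fun p => p.2 - c * p.1 = d)).card ≤ K) :
    pts.card ≤ 2 * (((pts ×ˢ pts).filter (fun pq => pq.1 ≠ pq.2)).image
      (fun pq => (pq.1.2 - pq.2.2) / (pq.1.1 - pq.2.1))).card + K + 1 := by
  classical
  by_cases h2 : pts.card ≤ 1
  · omega
  push_neg at h2
  set S := ((pts ×ˢ pts).filter (fun pq => pq.1 ≠ pq.2)).image
      (fun pq => (pq.1.2 - pq.2.2) / (pq.1.1 - pq.2.1)) with hS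
  set r := S.card with hr
  have hrS : S.card = r := hr.symm
  set eS := S.orderIsoOfFin hrS with heS
  set σ : ℕ → ℝ := fun j => if h : j - 1 < r then ((eS ⟨j - 1, h⟩ : ↥S) : ℝ) else 0 with hσ
  have hσS : ∀ j, 1 ≤ j → j ≤ r → σ j ∈ S := by
    intro j h1 h2'
    simp only [hσ]
    rw [dif_pos (by omega : j - 1 < r)]
    exact (eS ⟨j - 1, by omega⟩).2
  have hσmono : ∀ j j', 1 ≤ j → j < j' → j' ≤ r → σ j < σ j' := by
    intro j j' h1 h2' h3
    simp only [hσ]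
    rw [dif_pos (by omega : j - 1 < r), dif_pos (by omega : j' - 1 < r)]
    have : (⟨j - 1, by omega⟩ : Fin r) < ⟨j' - 1, by omega⟩ := by
      simp only [Fin.mk_lt_mk]
      omega
    exact_mod_cast (eS.lt_iff_lt).mpr this
  have hσsurj : ∀ τ ∈ S, ∃ j, 1 ≤ j ∧ j ≤ r ∧ σ j = τ := by
    intro τ hτ
    obtain ⟨k, hk⟩ := eS.surjective ⟨τ, hτ⟩
    refine ⟨k + 1, by omega, by omega, ?_⟩
    simp only [hσ]
    rw [dif_pos (by omega : k + 1 - 1 < r)]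
    have : (⟨k + 1 - 1, by omega⟩ : Fin r) = k := by
      ext; simp
    rw [this, hk]
  have hτlow : ∀ τ ∈ S, ∀ i, 1 ≤ i → i ≤ r → τ < σ i → 2 ≤ i ∧ τ ≤ σ (i-1) := by
    intro τ hτ i h1 h2' hlt
    obtain ⟨j, hj1, hj2, hj3⟩ := hσsurj τ hτ
    have hji : j < i := by
      by_contra hc
      push_neg at hc
      rcases eq_or_lt_of_le hc with hc' | hc'
      · rw [hc', hj3] at hlt
        exact lt_irrefl _ hlt
      · have := hσmono i j h1 hc' hj2
        rw [hj3] at this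
        linarith
    constructor
    · omega
    · rcases eq_or_lt_of_le (by omega : j ≤ i - 1) with hc' | hc'
      · rw [← hj3, hc']
      · have := hσmono j (i-1) hj1 hc' (by omega)
        rw [hj3] at this
        linarith
  have hτhigh : ∀ τ ∈ S, ∀ i, 1 ≤ i → i ≤ r → σ i < τ → i + 1 ≤ r ∧ σ (i+1) ≤ τ := by
    intro τ hτ i h1 h2' hlt
    obtain ⟨j, hj1, hj2, hj3⟩ := hσsurj τ hτ
    have hji : i < j := by
      by_contra hc
      push_neg at hc
      rcases eq_or_lt_of_le hc with hc' | hc'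
      · rw [← hc', hj3] at hlt
        exact lt_irrefl _ hlt
      · have := hσmono j i hj1 hc' h2'
        rw [hj3] at this
        linarith
    constructor
    · omega
    · rcases eq_or_lt_of_le (by omega : i + 1 ≤ j) with hc' | hc'
      · rw [← hj3, hc']
      · have := hσmono (i+1) j (by omega) hc' hj2
        rw [hj3] at this
        linarith
  set sval : ℕ → ℝ := fun i =>
    if i = 0 then σ 1 - 1 else if i < r then (σ i + σ (i+1))/2 else σ r + 1 with hsval
  have hG1 : ∀ i, 1 ≤ i → i ≤ r → sval (i-1) < σ i ∧ σ i < sval i := by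
    intro i h1 h2'
    constructor
    · by_cases hi1 : i = 1
      · subst hi1
        simp only [hsval]
        norm_num
      · have hi2 : 2 ≤ i := by omega
        simp only [hsval]
        rw [if_neg (by omega : ¬ (i - 1 = 0)), if_pos (by omega : i - 1 < r)]
        have := hσmono (i-1) i (by omega) (by omega) h2'
        have hrw : i - 1 + 1 = i := by omega
        rw [hrw]
        linarith
    · by_cases hir : i < r
      · simp only [hsval]
        rw [if_neg (by omega : ¬ (i = 0)), if_pos hir]
        have := hσmono i (i+1) h1 (by omega) (by omega)
        linarith
      · have hieq : i = r := by omega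
        simp only [hsval]
        rw [if_neg (by omega : ¬ (i = 0)), if_neg (by omega : ¬ (i < r)), hieq]
        linarith
  have hL1 : ∀ τ ∈ S, ∀ i, 1 ≤ i → i ≤ r → τ < σ i → τ < sval (i-1) := by
    intro τ hτ i h1 h2' hlt
    obtain ⟨hi2, hle⟩ := hτlow τ hτ i h1 h2' hlt
    have := (hG1 (i-1) (by omega) (by omega)).2
    linarith
  have hL2 : ∀ τ ∈ S, ∀ i, 1 ≤ i → i ≤ r → σ i < τ → sval i < τ := by
    intro τ hτ i h1 h2' hlt
    obtain ⟨hi2, hle⟩ := hτhigh τ hτ i h1 h2' hlt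
    have h := (hG1 (i+1) (by omega) (by omega)).1
    have hrw : i + 1 - 1 = i := by omega
    rw [hrw] at h
    linarith
  have hsvalS : ∀ i, i ≤ r → sval i ∉ S := by
    intro i hir hmem
    by_cases hr0 : r = 0
    · have : S = ∅ := Finset.card_eq_zero.mp (by omega)
      rw [this] at hmem
      exact absurd hmem (Finset.notMem_empty _)
    · by_cases hi0 : i = 0
      · subst hi0
        have hlt : sval 0 < σ 1 := (hG1 1 (by omega) (by omega)).1
        obtain ⟨hge, _⟩ := hτlow (sval 0) hmem 1 (by omega) (by omega) hlt
        omega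
      · by_cases hir' : i < r
        · have hlt : σ i < sval i := (hG1 i (by omega) hir).2
          obtain ⟨_, hge⟩ := hτhigh (sval i) hmem i (by omega) hir hlt
          have h := (hG1 (i+1) (by omega) (by omega)).1
          have hrw : i + 1 - 1 = i := by omega
          rw [hrw] at h
          linarith
        · have hieq : i = r := by omega
          have hlt : σ i < sval i := (hG1 i (by omega) hir).2
          obtain ⟨hc, _⟩ := hτhigh (sval i) hmem i (by omega) hir hlt
          omega
  -- now instantiate the abstract lemma on the subtype
  set α := {x // x ∈ pts} with hα
  have hcard : Fintype.card α = pts.card := Fintype.card_coe pts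
  set ρ : ℕ → α → ℝ := fun i p => (p : ℝ × ℝ).2 - sval i * (p : ℝ × ℝ).1 with hρ
  set g : ℕ → α → ℝ := fun i p => (p : ℝ × ℝ).2 - σ i * (p : ℝ × ℝ).1 with hg
  have hxne : ∀ p q : α, p ≠ q → (p : ℝ × ℝ).1 ≠ (q : ℝ × ℝ).1 := by
    intro p q hne
    exact hx p p.2 q q.2 (fun h => hne (Subtype.ext h))
  set sl : α → α → ℝ :=
    fun p q => ((p : ℝ × ℝ).2 - (q : ℝ × ℝ).2) / ((p : ℝ × ℝ).1 - (q : ℝ × ℝ).1) with hsl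
  have hslS : ∀ p q : α, p ≠ q → sl p q ∈ S := by
    intro p q hne
    rw [hS]
    apply Finset.mem_image.mpr
    refine ⟨((p : ℝ × ℝ), (q : ℝ × ℝ)), ?_, rfl⟩
    rw [Finset.mem_filter]
    exact ⟨Finset.mem_product.mpr ⟨p.2, q.2⟩, fun h => hne (Subtype.ext h)⟩
  have hid : ∀ (t : ℝ) (p q : α), p ≠ q →
      ((p : ℝ × ℝ).2 - t * (p : ℝ × ℝ).1) - ((q : ℝ × ℝ).2 - t * (q : ℝ × ℝ).1)
        = (sl p q - t) * ((p : ℝ × ℝ).1 - (q : ℝ × ℝ).1) := by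
    intro t p q hne
    have hd : (p : ℝ × ℝ).1 - (q : ℝ × ℝ).1 ≠ 0 := sub_ne_zero.mpr (hxne p q hne)
    field_simp [hsl]
    have h' : sl p q * ((p : ℝ × ℝ).1 - (q : ℝ × ℝ).1) = (p : ℝ × ℝ).2 - (q : ℝ × ℝ).2 := by
      simp only [hsl]; exact div_mul_cancel₀ _ hd
    linear_combination (-1 : ℝ) * h'
  have hgeq : ∀ i (p q : α), p ≠ q → (g i p = g i q ↔ sl p q = σ i) := by
    intro i p q hne
    have hd : (p : ℝ × ℝ).1 - (q : ℝ × ℝ).1 ≠ 0 := sub_ne_zero.mpr (hxne p q hne)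
    constructor
    · intro h
      have h0 : (sl p q - σ i) * ((p : ℝ × ℝ).1 - (q : ℝ × ℝ).1) = 0 := by
        rw [← hid (σ i) p q hne]
        simp only [hρ, hg] at h ⊢
        linarith [h]
      rcases mul_eq_zero.mp h0 with h' | h'
      · linarith [sub_eq_zero.mp h']
      · exact absurd h' hd
    · intro h
      have := hid (σ i) p q hne
      rw [h] at this
      simp only [sub_self, zero_mul] at this
      simp only [hg]
      linarith [this]
  have hordc : ∀ i (p q : α), p ≠ q →
      (ρ i p < ρ i q ↔ (sl p q - sval i) * ((p : ℝ × ℝ).1 - (q : ℝ × ℝ).1) < 0) := by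
    intro i p q hne
    have := hid (sval i) p q hne
    simp only [hρ]
    constructor
    · intro h
      linarith [this]
    · intro h
      linarith [this]
  have hinj : ∀ i, i ≤ r → Function.Injective (ρ i) := by
    intro i hir p q h
    by_contra hne
    have hd : (p : ℝ × ℝ).1 - (q : ℝ × ℝ).1 ≠ 0 := sub_ne_zero.mpr (hxne p q hne)
    have h0 : (sl p q - sval i) * ((p : ℝ × ℝ).1 - (q : ℝ × ℝ).1) = 0 := by
      rw [← hid (sval i) p q hne]
      simp only [hρ] at h
      linarith [h]
    rcases mul_eq_zero.mp h0 with h' | h'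
    · have : sl p q = sval i := by linarith [sub_eq_zero.mp h']
      exact hsvalS i hir (this ▸ hslS p q hne)
    · exact absurd h' hd
  -- the sign transfer lemma
  have hkey : ∀ i, 1 ≤ i → i ≤ r → ∀ s, (s = i - 1 ∨ s = i) → ∀ (a b : α), a ≠ b →
      sl a b ≠ σ i →
      0 < (sl a b - sval s) * ((a : ℝ × ℝ).1 - (b : ℝ × ℝ).1) →
      0 < (sl a b - σ i) * ((a : ℝ × ℝ).1 - (b : ℝ × ℝ).1) := by
    intro i h1 h2' s hs a b hne hneσ hpos
    have hτ : sl a b ∈ S := hslS a b hne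
    have hd : (a : ℝ × ℝ).1 - (b : ℝ × ℝ).1 ≠ 0 := sub_ne_zero.mpr (hxne a b hne)
    have hG := hG1 i h1 h2'
    rcases lt_or_gt_of_ne hd with hΔ | hΔ
    · -- Δ < 0, so sl a b < sval s
      have hlt : sl a b < sval s := by
        by_contra hcc
        push_neg at hcc
        nlinarith
      have hfin : sl a b < σ i := by
        rcases hs with hs' | hs'
        · rw [hs'] at hlt
          rcases lt_or_gt_of_ne hneσ with h' | h'
          · exact h'
          · have := hL2 (sl a b) hτ i h1 h2' h'
            have hG' := hG.1
            have hG'' := hG.2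
            linarith
        · rw [hs'] at hlt
          rcases lt_or_gt_of_ne hneσ with h' | h'
          · exact h'
          · have := hL2 (sl a b) hτ i h1 h2' h'
            linarith
      nlinarith
    · -- Δ > 0, so sl a b > sval s
      have hlt : sval s < sl a b := by
        by_contra hcc
        push_neg at hcc
        nlinarith
      have hfin : σ i < sl a b := by
        rcases hs with hs' | hs'
        · rw [hs'] at hlt
          rcases lt_or_gt_of_ne hneσ with h' | h'
          · have := hL1 (sl a b) hτ i h1 h2' h'
            linarith
          · exact h'
        · rw [hs'] at hlt
          rcases lt_or_gt_of_ne hneσ with h' | h'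
          · have := hL1 (sl a b) hτ i h1 h2' h'
            have hG' := hG.1
            have hG'' := hG.2
            linarith
          · exact h'
      nlinarith
  have H1 : ∀ i, 1 ≤ i → i ≤ r → ∀ p q : α, p ≠ q →
      ((ρ (i-1) p < ρ (i-1) q ↔ ρ i p < ρ i q) ↔ g i p ≠ g i q) := by
    intro i h1 h2' p q hne
    have hd : (p : ℝ × ℝ).1 - (q : ℝ × ℝ).1 ≠ 0 := sub_ne_zero.mpr (hxne p q hne)
    have hτ : sl p q ∈ S := hslS p q hne
    rw [hordc (i-1) p q hne, hordc i p q hne]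
    rw [Ne, hgeq i p q hne]
    constructor
    · intro hiff heq
      have hG := hG1 i h1 h2'
      rw [heq] at hiff
      rcases lt_or_gt_of_ne hd with hΔ | hΔ
      · have hLHS : (σ i - sval (i-1)) * ((p : ℝ × ℝ).1 - (q : ℝ × ℝ).1) < 0 :=
          mul_neg_of_pos_of_neg (by linarith [hG.1]) hΔ
        have hRHS := hiff.mp hLHS
        have : 0 < (σ i - sval i) * ((p : ℝ × ℝ).1 - (q : ℝ × ℝ).1) :=
          mul_pos_of_neg_of_neg (by linarith [hG.2]) hΔ
        linarith
      · have hRHS : (σ i - sval i) * ((p : ℝ × ℝ).1 - (q : ℝ × ℝ).1) < 0 :=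
          mul_neg_of_neg_of_pos (by linarith [hG.2]) hΔ
        have hLHS := hiff.mpr hRHS
        have : 0 < (σ i - sval (i-1)) * ((p : ℝ × ℝ).1 - (q : ℝ × ℝ).1) :=
          mul_pos (by linarith [hG.1]) hΔ
        linarith
    · intro hneσ
      rcases lt_or_gt_of_ne hneσ with h' | h'
      · -- sl < σ i : both factors negative
        have hl1 := hL1 (sl p q) hτ i h1 h2' h'
        have hl2 : sl p q < sval i := by
          have := (hG1 i h1 h2').2
          linarith
        constructor
        · intro h
          exact sign_transfer (by linarith) (by linarith) h
        · intro h
          exact sign_transfer (by linarith) (by linarith) h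
      · -- σ i < sl : both factors positive
        have hl2 := hL2 (sl p q) hτ i h1 h2' h'
        have hl1 : sval (i-1) < sl p q := by
          have := (hG1 i h1 h2').1
          linarith
        constructor
        · intro h
          exact sign_transfer' (by linarith) (by linarith) h
        · intro h
          exact sign_transfer' (by linarith) (by linarith) h
  have H2 : ∀ p q : α, p ≠ q → ∃! i, (1 ≤ i ∧ i ≤ r) ∧ g i p = g i q := by
    intro p q hne
    obtain ⟨j, hj1, hj2, hj3⟩ := hσsurj (sl p q) (hslS p q hne)
    refine ⟨j, ⟨⟨hj1, hj2⟩, (hgeq j p q hne).mpr hj3.symm⟩, ?_⟩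
    intro j' ⟨⟨hj'1, hj'2⟩, hj'3⟩
    have h3 := (hgeq j' p q hne).mp hj'3
    by_contra hc
    rcases lt_or_gt_of_ne hc with h' | h'
    · have := hσmono j' j hj'1 h' hj2
      rw [hj3, h3] at this
      exact lt_irrefl _ this
    · have := hσmono j j' hj1 h' hj'2
      rw [hj3, h3] at this
      exact lt_irrefl _ this
  have H3 : ∀ i, 1 ≤ i → i ≤ r → ∀ s, (s = i - 1 ∨ s = i) → ∀ p p' q : α,
      g i p = g i p' → g i q ≠ g i p → ¬(ρ s p < ρ s q ∧ ρ s q < ρ s p') := by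
    intro i h1 h2' s hs p p' q hgpp' hgq hcon
    obtain ⟨hc1, hc2⟩ := hcon
    have hpq : q ≠ p := by
      intro h
      rw [h] at hc1
      exact lt_irrefl _ hc1
    have hqp' : p' ≠ q := by
      intro h
      rw [h] at hc2
      exact lt_irrefl _ hc2
    -- claim A : 0 < g i q - g i p
    have hA : 0 < g i q - g i p := by
      have hord := (hordc s q p hpq)
      have hpos : 0 < (sl q p - sval s) * ((q : ℝ × ℝ).1 - (p : ℝ × ℝ).1) := by
        have : ¬ (ρ s q < ρ s p) := not_lt.mpr (le_of_lt hc1)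
        rw [hord] at this
        push_neg at this
        rcases lt_or_eq_of_le this with h' | h'
        · exact h'
        · exfalso
          have hd : (q : ℝ × ℝ).1 - (p : ℝ × ℝ).1 ≠ 0 := sub_ne_zero.mpr (hxne q p hpq)
          rcases mul_eq_zero.mp h'.symm with h'' | h''
          · have : sl q p = sval s := by linarith [sub_eq_zero.mp h'']
            have hsr : s ≤ r := by omega
            exact hsvalS s hsr (this ▸ hslS q p hpq)
          · exact hd h''
      have hneσ : sl q p ≠ σ i := by
        intro h
        exact hgq ((hgeq i q p hpq).mpr h)
      have := hkey i h1 h2' s hs q p hpq hneσ hpos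
      have hidq := hid (σ i) q p hpq
      simp only [hg]
      nlinarith [this, hidq]
    have hB : 0 < g i p' - g i q := by
      have hord := (hordc s p' q hqp')
      have hpos : 0 < (sl p' q - sval s) * (((p' : α) : ℝ × ℝ).1 - ((q : α) : ℝ × ℝ).1) := by
        have : ¬ (ρ s p' < ρ s q) := not_lt.mpr (le_of_lt hc2)
        rw [hord] at this
        push_neg at this
        rcases lt_or_eq_of_le this with h' | h'
        · exact h'
        · exfalso
          have hd : ((p' : α) : ℝ × ℝ).1 - ((q : α) : ℝ × ℝ).1 ≠ 0 :=
            sub_ne_zero.mpr (hxne p' q hqp')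
          rcases mul_eq_zero.mp h'.symm with h'' | h''
          · have : sl p' q = sval s := by linarith [sub_eq_zero.mp h'']
            have hsr : s ≤ r := by omega
            exact hsvalS s hsr (this ▸ hslS p' q hqp')
          · exact hd h''
      have hneσ : sl p' q ≠ σ i := by
        intro h
        have := (hgeq i p' q hqp').mpr h
        rw [hgpp'] at hgq
        exact hgq (this.symm ▸ rfl)
      have := hkey i h1 h2' s hs p' q hqp' hneσ hpos
      have hidq := hid (σ i) p' q hqp'
      simp only [hg]
      nlinarith [this, hidq]
    rw [hgpp'] at hA
    linarith
  have H4 : ∀ i, 1 ≤ i → i ≤ r → ∀ p : α,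
      (Finset.univ.filter (fun q : α => g i q = g i p)).card ≤ K := by
    intro i h1 h2' p
    have hcf : (Finset.univ.filter (fun q : α => g i q = g i p)).card
        = (pts.filter (fun q => q.2 - σ i * q.1 = g i p)).card := by
      apply Finset.card_bij (fun (q : α) _ => (q : ℝ × ℝ))
      · intro a ha
        simp only [Finset.mem_filter, Finset.mem_univ, true_and] at ha
        rw [Finset.mem_filter]
        exact ⟨a.2, ha⟩
      · intro a _ b _ hab
        exact Subtype.ext hab
      · intro b hb
        rw [Finset.mem_filter] at hb
        refine ⟨⟨b, hb.1⟩, ?_, rfl⟩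
        simp only [Finset.mem_filter, Finset.mem_univ, true_and]
        exact hb.2
    rw [hcf]
    exact hK (σ i) (g i p)
  have := ungar_abstract (K := K) (r := r) hinj H1 H2 H3 H4
  rw [hcard] at this
  omega

set_option maxHeartbeats 1000000 in
/-- Ungar-type bound for the grid: the quotient set of the positive differences is large. -/
theorem grid_ratio_bound (A : Finset ℝ) (hA : 2 ≤ A.card) :
    A.card ^ 2 ≤ 4 * ((((A - A).filter (fun x => 0 < x)) ×ˢ
      ((A - A).filter (fun x => 0 < x))).image (fun p => p.1 / p.2)).card + A.card + 5 := by
  classical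
  set D := A - A with hD
  set Dp := D.filter (fun x => 0 < x) with hDp
  set Q := (Dp ×ˢ Dp).image (fun p => p.1 / p.2) with hQ
  have hmemD : ∀ a ∈ A, ∀ b ∈ A, a - b ∈ D := fun a ha b hb => Finset.sub_mem_sub ha hb
  have hDneg : ∀ x ∈ D, -x ∈ D := by
    intro x hx
    rw [hD, Finset.mem_sub] at hx ⊢
    obtain ⟨a, ha, b, hb, rfl⟩ := hx
    exact ⟨b, hb, a, ha, by ring⟩
  set badM : Finset ℝ :=
    insert 0 (((D ×ˢ D).filter (fun p => p.2 ≠ 0)).image (fun p => -p.1 / p.2)) with hbadM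
  obtain ⟨M, hM⟩ := Infinite.exists_notMem_finset badM
  have hM0 : M ≠ 0 := fun h => hM (h ▸ Finset.mem_insert_self 0 _)
  have hshear : ∀ u ∈ D, ∀ v ∈ D, ¬(u = 0 ∧ v = 0) → u + M * v ≠ 0 := by
    intro u hu v hv hne heq
    by_cases hv0 : v = 0
    · rw [hv0] at heq
      simp at heq
      exact hne ⟨heq, hv0⟩
    · apply hM
      rw [hbadM]
      apply Finset.mem_insert_of_mem
      apply Finset.mem_image.mpr
      refine ⟨(u, v), ?_, ?_⟩
      · rw [Finset.mem_filter]
        exact ⟨Finset.mem_product.mpr ⟨hu, hv⟩, hv0⟩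
      · field_simp
        linarith
  set pts := (A ×ˢ A).image (fun ab : ℝ × ℝ => (ab.1 + M * ab.2, ab.2)) with hpts
  have hptsmem : ∀ p ∈ pts, ∃ a ∈ A, ∃ b ∈ A, p = (a + M * b, b) := by
    intro p hp
    rw [hpts, Finset.mem_image] at hp
    obtain ⟨ab, hab, rfl⟩ := hp
    rw [Finset.mem_product] at hab
    exact ⟨ab.1, hab.1, ab.2, hab.2, rfl⟩
  have hptscard : pts.card = A.card ^ 2 := by
    rw [hpts, Finset.card_image_of_injective _ (by
      intro x y hxy
      simp only [Prod.mk.injEq] at hxy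
      have h2' := hxy.2
      have h1' := hxy.1
      rw [h2'] at h1'
      exact Prod.ext (by linarith) h2'), Finset.card_product]
    ring
  have hx : ∀ p ∈ pts, ∀ q ∈ pts, p ≠ q → p.1 ≠ q.1 := by
    intro p hp q hq hne
    obtain ⟨a, ha, b, hb, rfl⟩ := hptsmem p hp
    obtain ⟨a', ha', b', hb', rfl⟩ := hptsmem q hq
    intro heq
    simp only at heq
    have hab : ¬ (a - a' = 0 ∧ b - b' = 0) := by
      rintro ⟨h1', h2'⟩
      apply hne
      have h1'' : a = a' := by linarith
      have h2'' : b = b' := by linarith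
      rw [h1'', h2'']
    apply hshear (a - a') (hmemD a ha a' ha') (b - b') (hmemD b hb b' hb') hab
    ring_nf
    ring_nf at heq
    linarith
  have hK : ∀ c d : ℝ, (pts.filter (fun p => p.2 - c * p.1 = d)).card ≤ A.card := by
    intro c d
    by_cases hc : c = 0
    · apply Finset.card_le_card_of_injOn (fun p => p.1 - M * p.2)
      · intro p hp
        rw [Finset.mem_coe, Finset.mem_filter] at hp
        obtain ⟨a, ha, b, hb, rfl⟩ := hptsmem p hp.1
        simpa using ha
      · intro p hp q hq hpq
        simp only [Finset.mem_coe, Finset.mem_filter] at hp hq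
        have h1' : p.2 = d := by
          have := hp.2
          rw [hc] at this
          linarith
        have h2' : q.2 = d := by
          have := hq.2
          rw [hc] at this
          linarith
        simp only at hpq
        apply Prod.ext
        · rw [h1', h2'] at hpq
          linarith
        · rw [h1', h2']
    · apply Finset.card_le_card_of_injOn (fun p => p.2)
      · intro p hp
        rw [Finset.mem_coe, Finset.mem_filter] at hp
        obtain ⟨a, ha, b, hb, rfl⟩ := hptsmem p hp.1
        simpa using hb
      · intro p hp q hq hpq
        simp only [Finset.mem_coe, Finset.mem_filter] at hp hq
        simp only at hpq
        apply Prod.ext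
        · have e1 := hp.2
          have e2 := hq.2
          rw [hpq] at e1
          have : c * p.1 = c * q.1 := by linarith
          exact mul_left_cancel₀ hc this
        · exact hpq
  have hslopes := slopes_bound A.card pts hx hK
  set S := ((pts ×ˢ pts).filter (fun pq => pq.1 ≠ pq.2)).image
      (fun pq => (pq.1.2 - pq.2.2) / (pq.1.1 - pq.2.1)) with hS
  -- now |S| ≤ 2|Q| + 2
  set T := Q ∪ Q.image (fun x => -x) with hT
  have hQmem : ∀ x y : ℝ, x ∈ Dp → y ∈ Dp → x / y ∈ Q := by
    intro x y hx' hy'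
    rw [hQ]
    apply Finset.mem_image.mpr
    exact ⟨(x, y), Finset.mem_product.mpr ⟨hx', hy'⟩, rfl⟩
  have hDpmem : ∀ x ∈ D, x ≠ 0 → (0 < x → x ∈ Dp) ∧ (x < 0 → -x ∈ Dp) := by
    intro x hx' hne
    constructor
    · intro h
      rw [hDp, Finset.mem_filter]
      exact ⟨hx', h⟩
    · intro h
      rw [hDp, Finset.mem_filter]
      exact ⟨hDneg x hx', by linarith⟩
  have hinjS : (S \ ({0, 1/M} : Finset ℝ)).card ≤ T.card := by
    apply Finset.card_le_card_of_injOn (fun s => 1/s - M)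
    · intro s hs
      simp only [Finset.mem_coe, Finset.mem_sdiff] at hs
      obtain ⟨hsS, hsnot⟩ := hs
      simp only [Finset.mem_insert, Finset.mem_singleton] at hsnot
      push_neg at hsnot
      obtain ⟨hs0, hsM⟩ := hsnot
      rw [hS, Finset.mem_image] at hsS
      obtain ⟨pq, hpq, hval⟩ := hsS
      rw [Finset.mem_filter, Finset.mem_product] at hpq
      obtain ⟨⟨hp1, hp2⟩, hpne⟩ := hpq
      obtain ⟨a, ha, b, hb, he1⟩ := hptsmem pq.1 hp1
      obtain ⟨a', ha', b', hb', he2⟩ := hptsmem pq.2 hp2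
      set u := a - a' with hu
      set v := b - b' with hv
      have huD : u ∈ D := hmemD a ha a' ha'
      have hvD : v ∈ D := hmemD b hb b' hb'
      have hnot : ¬ (u = 0 ∧ v = 0) := by
        rintro ⟨h1', h2'⟩
        apply hpne
        rw [he1, he2]
        have : a = a' := by rw [hu] at h1'; linarith
        have hbb : b = b' := by rw [hv] at h2'; linarith
        rw [this, hbb]
      have hden : u + M * v ≠ 0 := hshear u huD v hvD hnot
      have hsv : s = v / (u + M * v) := by
        rw [← hval, he1, he2, hu, hv]
        show (b - b') / ((a + M*b) - (a' + M*b')) = (b - b') / ((a - a') + M * (b - b'))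
        congr 1
        ring
      have hvne : v ≠ 0 := by
        intro h
        apply hs0
        rw [hsv, h]
        simp
      have hune : u ≠ 0 := by
        intro h
        apply hsM
        rw [hsv, h, zero_add]
        rw [div_eq_div_iff (mul_ne_zero hM0 hvne) hM0]
        ring
      have hphi : 1/s - M = u / v := by
        rw [hsv]
        field_simp
        ring
      show 1/s - M ∈ T
      rw [hphi]
      rcases lt_or_gt_of_ne hune with hu' | hu' <;> rcases lt_or_gt_of_ne hvne with hv' | hv'
      · -- u<0, v<0
        have : u / v = (-u) / (-v) := by
          rw [neg_div_neg_eq]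
        rw [this]
        exact Finset.mem_union_left _ (hQmem _ _ ((hDpmem u huD hune).2 hu')
          ((hDpmem v hvD hvne).2 hv'))
      · -- u<0, v>0
        apply Finset.mem_union_right
        apply Finset.mem_image.mpr
        refine ⟨(-u)/v, hQmem _ _ ((hDpmem u huD hune).2 hu') ((hDpmem v hvD hvne).1 hv'), ?_⟩
        rw [neg_div]
        ring
      · -- u>0, v<0
        apply Finset.mem_union_right
        apply Finset.mem_image.mpr
        refine ⟨u/(-v), hQmem _ _ ((hDpmem u huD hune).1 hu') ((hDpmem v hvD hvne).2 hv'), ?_⟩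
        rw [div_neg]
        ring
      · exact Finset.mem_union_left _ (hQmem _ _ ((hDpmem u huD hune).1 hu')
          ((hDpmem v hvD hvne).1 hv'))
    · intro s hs t ht hst
      simp only at hst
      have h1s : s⁻¹ = t⁻¹ := by
        rw [← one_div, ← one_div]
        linarith [hst]
      exact inv_injective h1s
  have hScard : S.card ≤ 2 * Q.card + 2 := by
    have h1' : S.card ≤ (S \ ({0, 1/M} : Finset ℝ)).card + ({0, 1/M} : Finset ℝ).card :=
      Finset.card_le_card_sdiff_add_card
    have h2' : ({0, 1/M} : Finset ℝ).card ≤ 2 := by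
      apply le_trans (Finset.card_insert_le 0 {1/M})
      simp
    have h3' : T.card ≤ 2 * Q.card := by
      apply le_trans (Finset.card_union_le _ _)
      have := Finset.card_image_le (s := Q) (f := fun x : ℝ => -x)
      omega
    omega
  rw [hptscard] at hslopes
  omega

set_option maxHeartbeats 1000000 in
/-- Solymosi-type sector bound: `(|Dp/Dp| - 1) * |Dp|^2 ≤ |DD+DD|^2`. -/
theorem sector_bound (Dp DD2 : Finset ℝ)
    (hpos : ∀ x ∈ Dp, 0 < x)
    (hcl : ∀ a ∈ Dp, ∀ b ∈ Dp, ∀ c ∈ Dp, ∀ d ∈ Dp, a * b + c * d ∈ DD2) :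
    (((Dp ×ˢ Dp).image (fun p => p.1 / p.2)).card - 1) * Dp.card ^ 2 ≤ DD2.card ^ 2 := by
  classical
  set Q := (Dp ×ˢ Dp).image (fun p => p.1 / p.2) with hQ
  set m := Q.card with hm
  by_cases hm1 : m ≤ 1
  · have : m - 1 = 0 := by omega
    rw [this, zero_mul]
    exact Nat.zero_le _
  push_neg at hm1
  have hmQ : Q.card = m := hm.symm
  set eQ := Q.orderIsoOfFin hmQ with heQ
  set lam : Fin m → ℝ := fun i => ((eQ i : ↥Q) : ℝ) with hlam
  have hlammono : ∀ i j : Fin m, i < j → lam i < lam j := by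
    intro i j hij
    simp only [hlam]
    exact_mod_cast (eQ.lt_iff_lt).mpr hij
  have hrep : ∀ i : Fin m, ∃ p : ℝ × ℝ, p.1 ∈ Dp ∧ p.2 ∈ Dp ∧ p.1 / p.2 = lam i := by
    intro i
    have : lam i ∈ Q := by
      simp only [hlam]
      exact (eQ i).2
    rw [hQ, Finset.mem_image] at this
    obtain ⟨p, hp, hval⟩ := this
    rw [Finset.mem_product] at hp
    exact ⟨p, hp.1, hp.2, hval⟩
  choose rep hrep1 hrep2 hrep3 using hrep
  set f : Fin m → ℝ := fun i => (rep i).1 with hf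
  set e : Fin m → ℝ := fun i => (rep i).2 with he
  have hepos : ∀ i, 0 < e i := fun i => hpos _ (hrep2 i)
  have hfpos : ∀ i, 0 < f i := fun i => hpos _ (hrep1 i)
  have hfe : ∀ i, f i = lam i * e i := by
    intro i
    have he' : (rep i).2 ≠ 0 := ne_of_gt (hepos i)
    calc f i = (rep i).1 := rfl
    _ = (rep i).1 / (rep i).2 * (rep i).2 := (div_mul_cancel₀ _ he').symm
    _ = lam i * e i := by rw [hrep3 i]
  have hlampos : ∀ i, 0 < lam i := by
    intro i
    have := hfe i
    have h1' := hfpos i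
    have h2' := hepos i
    nlinarith
  -- index maps
  have hidx0 : ∀ i : Fin (m-1), (i : ℕ) < m := fun i => by omega
  have hidx1 : ∀ i : Fin (m-1), (i : ℕ) + 1 < m := by
    intro i
    have := i.2
    omega
  set i0 : Fin (m-1) → Fin m := fun i => ⟨(i : ℕ), hidx0 i⟩ with hi0
  set i1 : Fin (m-1) → Fin m := fun i => ⟨(i : ℕ) + 1, hidx1 i⟩ with hi1
  set Φ : Fin (m-1) × ℝ × ℝ → ℝ × ℝ := fun t =>
    (t.2.1 * e (i0 t.1) + t.2.2 * e (i1 t.1),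
     t.2.1 * f (i0 t.1) + t.2.2 * f (i1 t.1)) with hΦ
  have hcardeq : ((Finset.univ : Finset (Fin (m-1))) ×ˢ Dp ×ˢ Dp).card
      = (m - 1) * Dp.card ^ 2 := by
    rw [Finset.card_product, Finset.card_product, Finset.card_univ, Fintype.card_fin]
    ring
  rw [← hcardeq]
  have hsq : DD2.card ^ 2 = (DD2 ×ˢ DD2).card := by
    rw [Finset.card_product]
    ring
  rw [hsq]
  apply Finset.card_le_card_of_injOn Φ
  · intro t ht
    simp only [Finset.mem_coe, Finset.mem_product] at ht
    obtain ⟨_, hd, hd'⟩ := ht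
    simp only [hΦ, Finset.mem_coe, Finset.mem_product]
    exact ⟨hcl _ hd _ (hrep2 _) _ hd' _ (hrep2 _),
      hcl _ hd _ (hrep1 _) _ hd' _ (hrep1 _)⟩
  · intro s hs t ht hst
    simp only [Finset.mem_coe, Finset.mem_product] at hs ht
    obtain ⟨_, hsd, hsd'⟩ := hs
    obtain ⟨_, htd, htd'⟩ := ht
    obtain ⟨i, d, d'⟩ := s
    obtain ⟨j, c, c'⟩ := t
    simp only at hsd hsd' htd htd'
    have hdpos := hpos d hsd
    have hd'pos := hpos d' hsd'
    have hcpos := hpos c htd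
    have hc'pos := hpos c' htd'
    simp only [hΦ, Prod.mk.injEq] at hst
    obtain ⟨hX, hY⟩ := hst
    -- sector location: for any such image, lam (i0 i) * X < Y < lam (i1 i) * X
    have hsector : ∀ (k : Fin (m-1)) (a b : ℝ), 0 < a → 0 < b →
        lam (i0 k) * (a * e (i0 k) + b * e (i1 k)) < a * f (i0 k) + b * f (i1 k)
        ∧ a * f (i0 k) + b * f (i1 k) < lam (i1 k) * (a * e (i0 k) + b * e (i1 k)) := by
      intro k a b ha hb
      have h01 : lam (i0 k) < lam (i1 k) := by
        apply hlammono
        simp only [hi0, hi1, Fin.mk_lt_mk]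
        omega
      have he0 := hepos (i0 k)
      have he1 := hepos (i1 k)
      have hfe0 := hfe (i0 k)
      have hfe1 := hfe (i1 k)
      rw [hfe0, hfe1]
      constructor
      · nlinarith [mul_pos (mul_pos hb he1) (sub_pos.mpr h01)]
      · nlinarith [mul_pos (mul_pos ha he0) (sub_pos.mpr h01)]
    have hij : i = j := by
      by_contra hne
      have hXpos : 0 < d * e (i0 i) + d' * e (i1 i) := by
        have := hepos (i0 i)
        have := hepos (i1 i)
        nlinarith
      have hsi := hsector i d d' hdpos hd'pos
      have hsj := hsector j c c' hcpos hc'pos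
      -- now both sectors contain the same point (X, Y) with X > 0
      rcases lt_or_gt_of_ne (fun h => hne (Fin.ext h) : (i : ℕ) ≠ (j : ℕ)) with h' | h'
      · -- i < j : lam (i1 i) ≤ lam (i0 j)
        have hle : lam (i1 i) ≤ lam (i0 j) := by
          rcases eq_or_lt_of_le (by omega : (i : ℕ) + 1 ≤ (j : ℕ)) with h'' | h''
          · have : i1 i = i0 j := by
              simp only [hi0, hi1]
              exact Fin.ext h''
            rw [this]
          · exact le_of_lt (hlammono _ _ (by simp only [hi0, hi1, Fin.mk_lt_mk]; omega))
        rw [← hX, ← hY] at hsj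
        nlinarith [hsi.2, hsj.1, mul_le_mul_of_nonneg_right hle (le_of_lt hXpos)]
      · have hle : lam (i1 j) ≤ lam (i0 i) := by
          rcases eq_or_lt_of_le (by omega : (j : ℕ) + 1 ≤ (i : ℕ)) with h'' | h''
          · have : i1 j = i0 i := by
              simp only [hi0, hi1]
              exact Fin.ext h''
            rw [this]
          · exact le_of_lt (hlammono _ _ (by simp only [hi0, hi1, Fin.mk_lt_mk]; omega))
        rw [← hX, ← hY] at hsj
        nlinarith [hsi.1, hsj.2, mul_le_mul_of_nonneg_right hle (le_of_lt hXpos)]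
    subst hij
    -- linear independence
    have hsolve : d = c ∧ d' = c' := by
      have e1 : (d - c) * e (i0 i) = (c' - d') * e (i1 i) := by linarith
      have e2 : (d - c) * f (i0 i) = (c' - d') * f (i1 i) := by linarith
      have hfe0 := hfe (i0 i)
      have hfe1 := hfe (i1 i)
      have h01 : lam (i0 i) < lam (i1 i) := by
        apply hlammono
        simp only [hi0, hi1, Fin.mk_lt_mk]
        omega
      have he0 := hepos (i0 i)
      have he1 := hepos (i1 i)
      rw [hfe0, hfe1] at e2
      have hkey0 : (d - c) * e (i0 i) * (lam (i0 i) - lam (i1 i)) = 0 := by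
        linear_combination e2 - lam (i1 i) * e1
      have hdc : d = c := by
        rcases mul_eq_zero.mp hkey0 with h'' | h''
        · rcases mul_eq_zero.mp h'' with h3 | h3
          · linarith
          · linarith
        · linarith
      constructor
      · exact hdc
      · rw [hdc] at e1
        simp only [sub_self, zero_mul] at e1
        have he1' := hepos (i1 i)
        have : (c' - d') = 0 := by
          rcases mul_eq_zero.mp e1.symm with h'' | h''
          · exact h''
          · linarith
        linarith
    rw [hsolve.1, hsolve.2]

end UngarAux

open UngarAux in
set_option maxHeartbeats 1000000 in
/-- There is an absolute constant `c > 0` such that for every finite set `A` of reals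
with `|A| ≥ 2` and `D = A - A`, `|D·D + D·D| ≥ c * |D| * |A|`. -/
theorem stmt_15 :
    ∃ c : ℝ, 0 < c ∧ ∀ A : Finset ℝ, 2 ≤ A.card →
      c * (((A - A).card : ℝ)) * (A.card : ℝ)
        ≤ ((((A - A) * (A - A)) + ((A - A) * (A - A))).card : ℝ) := by
  classical
  refine ⟨1/12, by norm_num, ?_⟩
  intro A hA
  set n := A.card with hn
  set D := A - A with hD
  set S2 := (D * D) + (D * D) with hS2
  set Dp := D.filter (fun x => 0 < x) with hDp
  set Q := (Dp ×ˢ Dp).image (fun p => p.1 / p.2) with hQ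
  -- basic membership facts
  have hDneg : ∀ x ∈ D, -x ∈ D := by
    intro x hx
    rw [hD, Finset.mem_sub] at hx ⊢
    obtain ⟨a, ha, b, hb, rfl⟩ := hx
    exact ⟨b, hb, a, ha, by ring⟩
  have h0D : (0:ℝ) ∈ D := by
    have : A.Nonempty := Finset.card_pos.mp (by omega)
    obtain ⟨a, ha⟩ := this
    rw [hD, Finset.mem_sub]
    exact ⟨a, ha, a, ha, by ring⟩
  -- d₀ : a positive difference
  obtain ⟨a, ha, b, hb, hab⟩ := Finset.one_lt_card.mp (by omega : 1 < A.card)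
  have hd0 : ∃ d₀ ∈ Dp, True := by
    rcases lt_or_gt_of_ne (sub_ne_zero.mpr hab) with h' | h'
    · refine ⟨b - a, ?_, trivial⟩
      rw [hDp, Finset.mem_filter]
      exact ⟨by rw [hD, Finset.mem_sub]; exact ⟨b, hb, a, ha, rfl⟩, by linarith⟩
    · refine ⟨a - b, ?_, trivial⟩
      rw [hDp, Finset.mem_filter]
      exact ⟨by rw [hD, Finset.mem_sub]; exact ⟨a, ha, b, hb, rfl⟩, by linarith⟩
  obtain ⟨d₀, hd₀, -⟩ := hd0
  have hd₀D : d₀ ∈ D := (Finset.mem_filter.mp hd₀).1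
  have hd₀pos : (0:ℝ) < d₀ := (Finset.mem_filter.mp hd₀).2
  -- trivial bound |D| ≤ |S2|
  have htriv : D.card ≤ S2.card := by
    apply Finset.card_le_card_of_injOn (fun x => d₀ * x + d₀ * d₀)
    · intro x hx
      rw [hS2]
      exact Finset.add_mem_add (Finset.mul_mem_mul hd₀D hx) (Finset.mul_mem_mul hd₀D hd₀D)
    · intro x _ y _ hxy
      simp only at hxy
      have : d₀ * x = d₀ * y := by linarith
      exact mul_left_cancel₀ (ne_of_gt hd₀pos) this
  -- |D| = 2|Dp| + 1
  have hDcard : D.card = 2 * Dp.card + 1 := by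
    have hsplit : D = Dp ∪ Dp.image (fun x => -x) ∪ {0} := by
      apply Finset.Subset.antisymm
      · intro x hx
        simp only [Finset.mem_union, Finset.mem_singleton, Finset.mem_image]
        rcases lt_trichotomy x 0 with h' | h' | h'
        · refine Or.inl (Or.inr ⟨-x, ?_, by ring⟩)
          rw [hDp, Finset.mem_filter]
          exact ⟨hDneg x hx, by linarith⟩
        · exact Or.inr h'
        · refine Or.inl (Or.inl ?_)
          rw [hDp, Finset.mem_filter]
          exact ⟨hx, h'⟩
      · intro x hx
        simp only [Finset.mem_union, Finset.mem_singleton, Finset.mem_image] at hx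
        rcases hx with (h' | ⟨y, hy, rfl⟩) | h'
        · exact (Finset.mem_filter.mp h').1
        · have := (Finset.mem_filter.mp hy).1
          exact hDneg y this
        · rw [h']
          exact h0D
    rw [hsplit]
    have hd1 : Disjoint (Dp ∪ Dp.image (fun x => -x)) ({0} : Finset ℝ) := by
      simp only [Finset.disjoint_singleton_right, Finset.mem_union, Finset.mem_image]
      rintro ((h' | ⟨y, hy, hy0⟩))
      · have := (Finset.mem_filter.mp h').2
        linarith
      · have := (Finset.mem_filter.mp hy).2
        linarith
    have hd2 : Disjoint Dp (Dp.image (fun x => -x)) := by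
      rw [Finset.disjoint_left]
      intro x hx1 hx2
      simp only [Finset.mem_image] at hx2
      obtain ⟨y, hy, rfl⟩ := hx2
      have h1' := (Finset.mem_filter.mp hx1).2
      have h2' := (Finset.mem_filter.mp hy).2
      linarith
    rw [Finset.card_union_of_disjoint hd1, Finset.card_union_of_disjoint hd2,
      Finset.card_image_of_injective _ neg_injective, Finset.card_singleton]
    ring
  -- sector bound
  have hsector : (Q.card - 1) * Dp.card ^ 2 ≤ S2.card ^ 2 := by
    apply sector_bound
    · intro x hx
      exact (Finset.mem_filter.mp hx).2
    · intro x hx y hy z hz w hw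
      rw [hS2]
      have hxD := (Finset.mem_filter.mp hx).1
      have hyD := (Finset.mem_filter.mp hy).1
      have hzD := (Finset.mem_filter.mp hz).1
      have hwD := (Finset.mem_filter.mp hw).1
      exact Finset.add_mem_add (Finset.mul_mem_mul hxD hyD) (Finset.mul_mem_mul hzD hwD)
  -- grid bound
  have hgrid : n ^ 2 ≤ 4 * Q.card + n + 5 := grid_ratio_bound A hA
  -- Q nonempty
  have hQ1 : 1 ≤ Q.card := by
    apply Finset.card_pos.mpr
    exact ⟨d₀ / d₀, Finset.mem_image.mpr ⟨(d₀, d₀), Finset.mem_product.mpr ⟨hd₀, hd₀⟩, rfl⟩⟩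
  -- Dp nonempty
  have hDp1 : 1 ≤ Dp.card := Finset.card_pos.mpr ⟨d₀, hd₀⟩
  -- main natural-number inequality
  have hmain : n * D.card ≤ 12 * S2.card := by
    by_cases hsmall : n ≤ 12
    · calc n * D.card ≤ 12 * D.card := Nat.mul_le_mul_right _ hsmall
      _ ≤ 12 * S2.card := Nat.mul_le_mul_left _ htriv
    · push_neg at hsmall
      have h16 : n ^ 2 ≤ 16 * (Q.card - 1) := by
        have hpow : n ^ 2 = n * n := by ring
        rw [hpow] at hgrid ⊢
        have h13 : 13 * n ≤ n * n := Nat.mul_le_mul_right n (by omega)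
        generalize hgen : n * n = t at hgrid h13 ⊢
        omega
      have hD3 : D.card ≤ 3 * Dp.card := by omega
      have hsq : (n * D.card) ^ 2 ≤ (12 * S2.card) ^ 2 := by
        calc (n * D.card) ^ 2 = n ^ 2 * D.card ^ 2 := by ring
        _ ≤ (16 * (Q.card - 1)) * (3 * Dp.card) ^ 2 := by
            apply Nat.mul_le_mul h16
            exact Nat.pow_le_pow_left hD3 2
        _ = 144 * ((Q.card - 1) * Dp.card ^ 2) := by ring
        _ ≤ 144 * S2.card ^ 2 := Nat.mul_le_mul_left _ hsector
        _ = (12 * S2.card) ^ 2 := by ring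
      exact Nat.pow_le_pow_iff_left (by norm_num) |>.mp hsq
  -- convert to ℝ
  have hcast : (n : ℝ) * (D.card : ℝ) ≤ 12 * (S2.card : ℝ) := by
    exact_mod_cast hmain
  linarith
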